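/- Lower bound on the exponent r(t,s) (equations (app7)–(app8)). Let v be continuously differentiable on [0,∞) with v(0) = 0 and v′(s) > 0 for all s, let d be continuously differentiable, and suppose there is Δ > 0 such that d(s)v′(s) − v(s)d′(s) ≥ Δ v′(s)(1 + √(v(s))) for all 0 ≤ s ≤ t. Define r(t,s) = (v(t)v(s)/v(t,s)) (d(s)/v(s) − d(t)/v(t))², where v(t,s) = v(t) − v(s). Then for all 0 < s < t: d(s)/v(s) − d(t)/v(t) ≥ Δ [v(t,s)/(v(t)v(s)) + 2(√(v(t)) − √(v(s)))/√(v(t)v(s))], and consequently r(t,s) ≥ Δ² [v(t,s)/(v(t)v(s)) + 4(√(v(t)) − √(v(s)))²/v(t,s)] ≥ Δ² (v(t,s)/v(t)) (1 + 1/v(s)). -/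

import Mathlib

open MeasureTheory Real

set_option maxHeartbeats 1000000 in
/-- Lower bound on the exponent r(t,s) (equations (app7)–(app8)). -/
theorem exponent_lower_bound
    (t : ℝ) (ht : 0 < t)
    (v d v' d' : ℝ → ℝ)
    (hv0 : v 0 = 0)
    (hv : ∀ s ∈ Set.Ici (0:ℝ), HasDerivWithinAt v (v' s) (Set.Ici 0) s)
    (hv'c : ContinuousOn v' (Set.Ici 0))
    (hv'pos : ∀ s ∈ Set.Ici (0:ℝ), 0 < v' s)
    (hd : ∀ s ∈ Set.Ici (0:ℝ), HasDerivWithinAt d (d' s) (Set.Ici 0) s)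
    (hd'c : ContinuousOn d' (Set.Ici 0))
    (Δ : ℝ) (hΔ : 0 < Δ)
    (hkey : ∀ s ∈ Set.Icc (0:ℝ) t,
      Δ * v' s * (1 + Real.sqrt (v s)) ≤ d s * v' s - v s * d' s)
    (s : ℝ) (hs : 0 < s) (hst : s < t) :
    Δ * ((v t - v s) / (v t * v s)
          + 2 * (Real.sqrt (v t) - Real.sqrt (v s)) / Real.sqrt (v t * v s))
        ≤ d s / v s - d t / v t
    ∧ Δ ^ 2 * ((v t - v s) / (v t * v s)
          + 4 * (Real.sqrt (v t) - Real.sqrt (v s)) ^ 2 / (v t - v s))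
        ≤ v t * v s / (v t - v s) * (d s / v s - d t / v t) ^ 2
    ∧ Δ ^ 2 * ((v t - v s) / v t) * (1 + 1 / v s)
        ≤ v t * v s / (v t - v s) * (d s / v s - d t / v t) ^ 2 := by
  have hvc : ContinuousOn v (Set.Ici 0) := fun x hx => (hv x hx).continuousWithinAt
  have hdc : ContinuousOn d (Set.Ici 0) := fun x hx => (hd x hx).continuousWithinAt
  have hderV : ∀ u : ℝ, 0 < u → HasDerivAt v (v' u) u := fun u hu =>
    (hv u hu.le).hasDerivAt
      (Filter.mem_of_superset (isOpen_Ioi.mem_nhds hu) Set.Ioi_subset_Ici_self)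
  have hderD : ∀ u : ℝ, 0 < u → HasDerivAt d (d' u) u := fun u hu =>
    (hd u hu.le).hasDerivAt
      (Filter.mem_of_superset (isOpen_Ioi.mem_nhds hu) Set.Ioi_subset_Ici_self)
  have hmono : StrictMonoOn v (Set.Ici 0) := by
    apply strictMonoOn_of_deriv_pos (convex_Ici 0) hvc
    intro x hx
    rw [interior_Ici] at hx
    rw [(hderV x hx).deriv]
    exact hv'pos x (Set.mem_Ici.mpr (le_of_lt hx))
  have hvpos : ∀ u : ℝ, 0 < u → 0 < v u := fun u hu => by
    have := hmono Set.self_mem_Ici (Set.mem_Ici.mpr hu.le) hu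
    rwa [hv0] at this
  have hvs : 0 < v s := hvpos s hs
  have hvt : 0 < v t := hvpos t ht
  have hvst : v s < v t := hmono (Set.mem_Ici.mpr hs.le) (Set.mem_Ici.mpr ht.le) hst
  have hDpos : 0 < v t - v s := sub_pos.mpr hvst
  set a := Real.sqrt (v t) with ha
  set b := Real.sqrt (v s) with hb
  have hapos : 0 < a := Real.sqrt_pos.mpr hvt
  have hbpos : 0 < b := Real.sqrt_pos.mpr hvs
  have hab : b < a := Real.sqrt_lt_sqrt hvs.le hvst
  have ha2 : a ^ 2 = v t := Real.sq_sqrt hvt.le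
  have hb2 : b ^ 2 = v s := Real.sq_sqrt hvs.le
  have hsqC : Real.sqrt (v t * v s) = a * b := Real.sqrt_mul hvt.le (v s)
  -- Step 1: the linear bound, via monotonicity of an auxiliary function
  set H : ℝ → ℝ := fun u => d u / v u - Δ * ((v u)⁻¹ + 2 * (Real.sqrt (v u))⁻¹) with hH
  have hHderiv : ∀ u ∈ Set.Ioo s t, HasDerivAt H
      ((d' u * v u - d u * v' u + Δ * (v' u * (1 + Real.sqrt (v u)))) / (v u) ^ 2) u := by
    intro u hu
    have hu0 : 0 < u := hs.trans hu.1
    have hvu : 0 < v u := hvpos u hu0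
    have hsvu : 0 < Real.sqrt (v u) := Real.sqrt_pos.mpr hvu
    have h1 := hderD u hu0
    have h2 := hderV u hu0
    have hdiv := h1.div h2 hvu.ne'
    have hinv := h2.inv hvu.ne'
    have hsq := h2.sqrt hvu.ne'
    have hsqinv := hsq.inv hsvu.ne'
    have hcomb := hdiv.sub ((hinv.add (hsqinv.const_mul (2:ℝ))).const_mul Δ)
    refine hcomb.congr_deriv ?_
    symm
    have hc2 : Real.sqrt (v u) ^ 2 = v u := Real.sq_sqrt hvu.le
    have hcne : Real.sqrt (v u) ≠ 0 := hsvu.ne'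
    field_simp
    linear_combination ((Real.sqrt (v u) ^ 2 + v u) * v' u * Δ) * hc2
  have hanti : AntitoneOn H (Set.Icc s t) := by
    have hsubset : Set.Icc s t ⊆ Set.Ici (0:ℝ) := fun x hx => le_trans hs.le hx.1
    have hvne : ∀ x ∈ Set.Icc s t, v x ≠ 0 := fun x hx =>
      (hvpos x (lt_of_lt_of_le hs hx.1)).ne'
    have hsqne : ∀ x ∈ Set.Icc s t, Real.sqrt (v x) ≠ 0 := fun x hx =>
      (Real.sqrt_pos.mpr (hvpos x (lt_of_lt_of_le hs hx.1))).ne'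
    have hHc : ContinuousOn H (Set.Icc s t) := by
      apply ContinuousOn.sub
      · exact (hdc.mono hsubset).div (hvc.mono hsubset) hvne
      · exact continuousOn_const.mul
          (((hvc.mono hsubset).inv₀ hvne).add
            (continuousOn_const.mul
              ((Real.continuous_sqrt.comp_continuousOn (hvc.mono hsubset)).inv₀ hsqne)))
    apply antitoneOn_of_deriv_nonpos (convex_Icc s t) hHc
    · intro x hx
      rw [interior_Icc] at hx
      exact (hHderiv x hx).differentiableAt.differentiableWithinAt
    · intro x hx
      rw [interior_Icc] at hx
      rw [(hHderiv x hx).deriv]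
      have hx0 : 0 < x := hs.trans hx.1
      have hk := hkey x ⟨hx0.le, hx.2.le⟩
      apply div_nonpos_of_nonpos_of_nonneg
      · nlinarith [hk]
      · positivity
  have hHst : H t ≤ H s :=
    hanti (Set.left_mem_Icc.mpr hst.le) (Set.right_mem_Icc.mpr hst.le) hst.le
  have key1 : (v t - v s) / (v t * v s) + 2 * (a - b) / (a * b)
      = ((v s)⁻¹ + 2 * b⁻¹) - ((v t)⁻¹ + 2 * a⁻¹) := by
    field_simp
    ring
  have first : Δ * ((v t - v s) / (v t * v s) + 2 * (a - b) / Real.sqrt (v t * v s))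
      ≤ d s / v s - d t / v t := by
    rw [hsqC, key1]
    have : d t / v t - Δ * ((v t)⁻¹ + 2 * a⁻¹)
        ≤ d s / v s - Δ * ((v s)⁻¹ + 2 * b⁻¹) := hHst
    nlinarith [this]
  have hsec : Δ ^ 2 * ((v t - v s) / (v t * v s) + 4 * (a - b) ^ 2 / (v t - v s))
      ≤ v t * v s / (v t - v s) * (d s / v s - d t / v t) ^ 2 := by
    set A : ℝ := (v t - v s) / (v t * v s) + 2 * (a - b) / Real.sqrt (v t * v s) with hA
    have hApos : 0 < A := by
      rw [hA, hsqC]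
      have h1 : 0 < (v t - v s) / (v t * v s) := by positivity
      have h2 : 0 ≤ 2 * (a - b) / (a * b) := by
        apply div_nonneg _ (by positivity)
        linarith
      linarith
    have hXA : (Δ * A) ^ 2 ≤ (d s / v s - d t / v t) ^ 2 :=
      pow_le_pow_left₀ (by positivity) first 2
    have hid : v t * v s / (v t - v s) * (Δ * A) ^ 2
        = Δ ^ 2 * ((v t - v s) / (v t * v s) + 4 * (a - b) / (a * b)
            + 4 * (a - b) ^ 2 / (v t - v s)) := by
      rw [hA, hsqC, ← ha2, ← hb2]
      have h1 : a ^ 2 - b ^ 2 ≠ 0 := by nlinarith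
      field_simp
      ring
    calc Δ ^ 2 * ((v t - v s) / (v t * v s) + 4 * (a - b) ^ 2 / (v t - v s))
        ≤ Δ ^ 2 * ((v t - v s) / (v t * v s) + 4 * (a - b) / (a * b)
            + 4 * (a - b) ^ 2 / (v t - v s)) := by
          apply mul_le_mul_of_nonneg_left _ (sq_nonneg Δ)
          have : 0 ≤ 4 * (a - b) / (a * b) :=
            div_nonneg (by linarith) (by positivity)
          linarith
      _ = v t * v s / (v t - v s) * (Δ * A) ^ 2 := hid.symm
      _ ≤ v t * v s / (v t - v s) * (d s / v s - d t / v t) ^ 2 :=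
          mul_le_mul_of_nonneg_left hXA (by positivity)
  refine ⟨first, hsec, ?_⟩
  -- Step 3
  have hsplit : (v t - v s) / v t * (1 + 1 / v s)
      = (v t - v s) / v t + (v t - v s) / (v t * v s) := by
    field_simp
  have hfrac : (v t - v s) / v t ≤ 4 * (a - b) ^ 2 / (v t - v s) := by
    rw [← ha2, ← hb2, div_le_div_iff₀ (by positivity) (by nlinarith)]
    nlinarith [sq_nonneg (a - b), sq_nonneg (a + b)]
  have hsecond : Δ ^ 2 * ((v t - v s) / (v t * v s)
        + 4 * (a - b) ^ 2 / (v t - v s))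
      ≤ v t * v s / (v t - v s) * (d s / v s - d t / v t) ^ 2 := hsec
  refine le_trans ?_ hsecond
  calc Δ ^ 2 * ((v t - v s) / v t) * (1 + 1 / v s)
      = Δ ^ 2 * ((v t - v s) / v t + (v t - v s) / (v t * v s)) := by
        rw [mul_assoc, hsplit]
    _ ≤ Δ ^ 2 * ((v t - v s) / (v t * v s) + 4 * (a - b) ^ 2 / (v t - v s)) := by
        apply mul_le_mul_of_nonneg_left _ (sq_nonneg Δ)
        linarith [hfrac]
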